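/- Define, for θ ∈ ℝ and v > 0, G(θ, v) = v⁻¹ ∫_ℝ ∫_ℝ exp{−(n/(2σ²))(ȳ − θ)² − (n₀/(2σ₀²))(ȳ₀ − θ₀)² − ((θ − μ)² + (θ₀ − μ)²)/(2v)} dθ₀ dμ (the hierarchical-model conditional joint density of θ given v, with improper uniform prior on μ), and for a₀ ∈ (0,1), H(θ, a₀) = exp{−(n/(2σ²))(ȳ − θ)²} · exp{−(a₀/(2σ₀²))(S₀ + n₀(ȳ₀ − θ)²)} / ∫_ℝ exp{−(a₀/(2σ₀²))(S₀ + n₀(ȳ₀ − t)²)} dt (the normalized-power-prior conditional density of θ given a₀). Then for all θ ∈ ℝ and v > 0, G(θ, v) = (2π)^{3/2} (σ₀²/n₀)^{1/2} · H(θ, f(v)); in particular the ratio G(θ, v)/H(θ, f(v)) is a constant depending only on σ₀² and n₀, not on θ, v, ȳ, ȳ₀, n, σ² or S₀. -/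

import Mathlib

open MeasureTheory Real

lemma gauss_shift (b c : ℝ) :
    ∫ x : ℝ, Real.exp (-b * (x - c) ^ 2) = Real.sqrt (π / b) := by
  rw [show (∫ x : ℝ, Real.exp (-b * (x - c) ^ 2)) = ∫ x : ℝ, Real.exp (-b * x ^ 2) from
    integral_sub_right_eq_self (fun x => Real.exp (-b * x ^ 2)) c, integral_gaussian]

lemma gauss_two (p q : ℝ) (hp : 0 < p) (hq : 0 < q) (a b : ℝ) :
    ∫ x : ℝ, Real.exp (-p * (x - a) ^ 2 - q * (x - b) ^ 2)
      = Real.sqrt (π / (p + q)) * Real.exp (-(p * q / (p + q)) * (a - b) ^ 2) := by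
  have hpq : (0:ℝ) < p + q := by linarith
  have key : ∀ x : ℝ, -p * (x - a) ^ 2 - q * (x - b) ^ 2
      = -(p + q) * (x - (p * a + q * b) / (p + q)) ^ 2 + -(p * q / (p + q)) * (a - b) ^ 2 := by
    intro x; field_simp; ring
  calc ∫ x : ℝ, Real.exp (-p * (x - a) ^ 2 - q * (x - b) ^ 2)
      = ∫ x : ℝ, Real.exp (-(p + q) * (x - (p * a + q * b) / (p + q)) ^ 2) *
          Real.exp (-(p * q / (p + q)) * (a - b) ^ 2) := by
        simp_rw [← Real.exp_add, key]
    _ = Real.sqrt (π / (p + q)) * Real.exp (-(p * q / (p + q)) * (a - b) ^ 2) := by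
        rw [integral_mul_const, gauss_shift]

/-- the hierarchical-model conditional joint density of `θ` given `v`
(improper uniform prior on `μ`) is a constant multiple — depending only on `σ₀²` and
`n₀` — of the normalized-power-prior conditional density of `θ` given `a₀ = f(v)`. -/
theorem stmt_9 (σ2 σ02 n n0 : ℝ) (hσ2 : 0 < σ2) (hσ02 : 0 < σ02) (hn : 0 < n) (hn0 : 0 < n0)
    (ybar ybar0 S0 : ℝ) (hS0 : 0 ≤ S0)
    (f : ℝ → ℝ) (hf : ∀ v, f v = (1 + 2 * v * n0 / σ02)⁻¹)
    (G H : ℝ → ℝ → ℝ)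
    (hG : ∀ θ : ℝ, ∀ v > (0 : ℝ), G θ v = v⁻¹ * ∫ μ : ℝ, ∫ θ0 : ℝ,
        Real.exp (-(n / (2 * σ2)) * (ybar - θ) ^ 2 -
          (n0 / (2 * σ02)) * (ybar0 - θ0) ^ 2 -
          ((θ - μ) ^ 2 + (θ0 - μ) ^ 2) / (2 * v)))
    (hH : ∀ θ a0 : ℝ, H θ a0 =
        Real.exp (-(n / (2 * σ2)) * (ybar - θ) ^ 2) *
          Real.exp (-(a0 / (2 * σ02)) * (S0 + n0 * (ybar0 - θ) ^ 2)) /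
        (∫ t : ℝ, Real.exp (-(a0 / (2 * σ02)) * (S0 + n0 * (ybar0 - t) ^ 2)))) :
    ∀ θ : ℝ, ∀ v > (0 : ℝ),
      G θ v = (2 * π) ^ ((3 : ℝ) / 2) * Real.sqrt (σ02 / n0) * H θ (f v) := by
  intro θ v hv
  have hden : (0:ℝ) < 1 + 2 * v * n0 / σ02 := by positivity
  set a0 : ℝ := (1 + 2 * v * n0 / σ02)⁻¹ with ha0def
  have ha0 : 0 < a0 := by positivity
  set A : ℝ := n / (2 * σ2) * (ybar - θ) ^ 2 with hA
  set α : ℝ := n0 / (2 * σ02) with hαdef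
  set β : ℝ := (2 * v)⁻¹ with hβdef
  have hα : 0 < α := by positivity
  have hβ : 0 < β := by positivity
  have hαβ : 0 < α + β := by linarith
  set c : ℝ := α * β / (α + β) with hcdef
  have hc : 0 < c := by positivity
  have hβc : 0 < β + c := by linarith
  set e2 : ℝ := a0 * n0 / (2 * σ02) with he2def
  have he2 : 0 < e2 := by positivity
  -- inner integral over θ0
  have inner : ∀ μ : ℝ, (∫ θ0 : ℝ,
      Real.exp (-(n / (2 * σ2)) * (ybar - θ) ^ 2 -
        (n0 / (2 * σ02)) * (ybar0 - θ0) ^ 2 -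
        ((θ - μ) ^ 2 + (θ0 - μ) ^ 2) / (2 * v)))
      = (Real.exp (-A) * Real.sqrt (π / (α + β))) *
          Real.exp (-β * (μ - θ) ^ 2 - c * (μ - ybar0) ^ 2) := by
    intro μ
    have step : ∀ θ0 : ℝ,
        Real.exp (-(n / (2 * σ2)) * (ybar - θ) ^ 2 -
          (n0 / (2 * σ02)) * (ybar0 - θ0) ^ 2 -
          ((θ - μ) ^ 2 + (θ0 - μ) ^ 2) / (2 * v))
        = Real.exp ((-A - β * (μ - θ) ^ 2) + (-α * (θ0 - ybar0) ^ 2 - β * (θ0 - μ) ^ 2)) := by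
      intro θ0
      congr 1
      rw [hA, hαdef, hβdef]
      field_simp
      ring
    simp_rw [step, Real.exp_add]
    rw [integral_const_mul, gauss_two α β hα hβ ybar0 μ]
    rw [show (-A - β * (μ - θ) ^ 2) = -A + (-β * (μ - θ) ^ 2) from by ring, Real.exp_add,
      show -(α * β / (α + β)) * (ybar0 - μ) ^ 2 = -c * (μ - ybar0) ^ 2 from by rw [hcdef]; ring,
      show (-β * (μ - θ) ^ 2 - c * (μ - ybar0) ^ 2)
        = (-β * (μ - θ) ^ 2) + (-c * (μ - ybar0) ^ 2) from by ring, Real.exp_add]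
    ring
  have hGv : G θ v = v⁻¹ * ((Real.exp (-A) * Real.sqrt (π / (α + β))) *
      (Real.sqrt (π / (β + c)) * Real.exp (-(β * c / (β + c)) * (θ - ybar0) ^ 2))) := by
    rw [hG θ v hv]
    congr 1
    rw [integral_congr_ae (Filter.Eventually.of_forall inner)]
    rw [integral_const_mul, gauss_two β c hβ hc θ ybar0]
  -- H side
  have denom : (∫ t : ℝ, Real.exp (-(a0 / (2 * σ02)) * (S0 + n0 * (ybar0 - t) ^ 2)))
      = Real.exp (-(a0 / (2 * σ02)) * S0) * Real.sqrt (π / e2) := by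
    have step : ∀ t : ℝ, Real.exp (-(a0 / (2 * σ02)) * (S0 + n0 * (ybar0 - t) ^ 2))
        = Real.exp (-(a0 / (2 * σ02)) * S0) * Real.exp (-e2 * (t - ybar0) ^ 2) := by
      intro t
      rw [← Real.exp_add]
      congr 1
      rw [he2def]
      field_simp
      ring
    simp_rw [step]
    rw [integral_const_mul, gauss_shift]
  have hHnum : Real.exp (-(a0 / (2 * σ02)) * (S0 + n0 * (ybar0 - θ) ^ 2))
      = Real.exp (-(a0 / (2 * σ02)) * S0) * Real.exp (-e2 * (ybar0 - θ) ^ 2) := by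
    rw [← Real.exp_add]
    congr 1
    rw [he2def]
    field_simp
    ring
  have hHv : H θ (f v) = Real.exp (-A) * Real.exp (-e2 * (ybar0 - θ) ^ 2) / Real.sqrt (π / e2) := by
    rw [hH θ (f v), hf v, ← ha0def, denom, hHnum,
      show -(n / (2 * σ2)) * (ybar - θ) ^ 2 = -A from by rw [hA]; ring]
    rw [div_eq_div_iff (by positivity) (by positivity)]
    ring
  -- the exponent coefficients agree
  have hexp : β * c / (β + c) = e2 := by
    rw [hcdef, hαdef, hβdef, he2def, ha0def]
    have h1 : (2*v : ℝ) ≠ 0 := by positivity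
    have h2 : α + β ≠ 0 := hαβ.ne'
    field_simp
    ring
  -- constants agree
  have hK3 : (0:ℝ) < Real.sqrt (π / e2) := Real.sqrt_pos.mpr (by positivity)
  have key : v⁻¹ * Real.sqrt (π / (α + β)) * Real.sqrt (π / (β + c)) * Real.sqrt (π / e2)
      = (2 * π) ^ ((3 : ℝ) / 2) * Real.sqrt (σ02 / n0) := by
    have hL : (0:ℝ) ≤ v⁻¹ * Real.sqrt (π / (α + β)) * Real.sqrt (π / (β + c)) * Real.sqrt (π / e2) := by
      positivity
    have hR : (0:ℝ) ≤ (2 * π) ^ ((3 : ℝ) / 2) * Real.sqrt (σ02 / n0) := by positivity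
    have hsq : (v⁻¹ * Real.sqrt (π / (α + β)) * Real.sqrt (π / (β + c)) * Real.sqrt (π / e2)) ^ 2
        = ((2 * π) ^ ((3 : ℝ) / 2) * Real.sqrt (σ02 / n0)) ^ 2 := by
      have e1 : (Real.sqrt (π / (α + β))) ^ 2 = π / (α + β) :=
        Real.sq_sqrt (by positivity)
      have e2' : (Real.sqrt (π / (β + c))) ^ 2 = π / (β + c) :=
        Real.sq_sqrt (by positivity)
      have e3 : (Real.sqrt (π / e2)) ^ 2 = π / e2 := Real.sq_sqrt (by positivity)
      have e4 : (Real.sqrt (σ02 / n0)) ^ 2 = σ02 / n0 := Real.sq_sqrt (by positivity)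
      have e5 : ((2 * π) ^ ((3 : ℝ) / 2)) ^ 2 = (2 * π) ^ (3:ℕ) := by
        rw [← Real.rpow_natCast ((2 * π) ^ ((3 : ℝ) / 2)) 2,
          ← Real.rpow_natCast (2 * π) 3,
          ← Real.rpow_mul (by positivity : (0:ℝ) ≤ 2 * π)]
        norm_num
      rw [mul_pow, mul_pow, mul_pow, mul_pow, e1, e2', e3, e4, e5]
      rw [hcdef, hαdef, hβdef, he2def, ha0def]
      have h1 : (2*v : ℝ) ≠ 0 := by positivity
      have h2 : α + β ≠ 0 := hαβ.ne'
      field_simp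
      ring
    calc v⁻¹ * Real.sqrt (π / (α + β)) * Real.sqrt (π / (β + c)) * Real.sqrt (π / e2)
        = Real.sqrt ((v⁻¹ * Real.sqrt (π / (α + β)) * Real.sqrt (π / (β + c)) *
            Real.sqrt (π / e2)) ^ 2) := (Real.sqrt_sq hL).symm
      _ = Real.sqrt (((2 * π) ^ ((3 : ℝ) / 2) * Real.sqrt (σ02 / n0)) ^ 2) := by rw [hsq]
      _ = (2 * π) ^ ((3 : ℝ) / 2) * Real.sqrt (σ02 / n0) := Real.sqrt_sq hR
  -- conclude
  rw [hGv, hHv,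
    show -(β * c / (β + c)) * (θ - ybar0) ^ 2 = -e2 * (ybar0 - θ) ^ 2 from by rw [hexp]; ring]
  rw [← mul_div_assoc, eq_div_iff hK3.ne']
  linear_combination (Real.exp (-A) * Real.exp (-e2 * (ybar0 - θ) ^ 2)) * key
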